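/- Let a, e be integers with 1 < e < a and set r = 2^e − 1. For any integer z with v₂(z) = u ≥ 1, one has r^{2z} − 1 ≡ (r² − 1 + 2^{2e+1})·z (mod 2^{2e+2+u}). -/

import Mathlib

open Finset

lemma keyA_ineq (e u v k : ℕ) (he : 2 ≤ e) (hk : 3 ≤ k) (hvk : 2 ^ v ≤ k) :
    2 * e + 2 + u ≤ (u - v) + k * (e + 1) := by
  have h1 : v < 2 ^ v := (Nat.lt_two_pow_self (n := v))
  have h2 : v + 1 ≤ k := le_trans h1 hvk
  rcases le_or_gt v u with h | h
  · obtain ⟨d, rfl⟩ := Nat.exists_eq_add_of_le h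
    have hd : v + d - v = d := by omega
    rw [hd]
    rcases le_or_gt v 1 with hv | hv
    · nlinarith
    · nlinarith
  · have hd : u - v = 0 := by omega
    rw [hd]
    nlinarith

lemma keyA_choose (z u k : ℕ) (hz : 1 ≤ z) (hk : 1 ≤ k) (hzu : 2 ^ u ∣ z) :
    2 ^ (u - k.factorization 2) ∣ z.choose k := by
  set v := k.factorization 2 with hv
  rcases le_or_gt u v with h | h
  · simp [Nat.sub_eq_zero_of_le h]
  have hid : z * (z - 1).choose (k - 1) = z.choose k * k := by
    have := Nat.add_one_mul_choose_eq (z - 1) (k - 1)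
    rwa [Nat.sub_add_cancel hz, Nat.sub_add_cancel hk] at this
  have hdvd : 2 ^ u ∣ z.choose k * k := hid ▸ hzu.mul_right _
  set m := k / 2 ^ v with hm
  have hkm : 2 ^ v * m = k := Nat.ordProj_mul_ordCompl_eq_self k 2
  have hmodd : ¬ 2 ∣ m := Nat.not_dvd_ordCompl Nat.prime_two (by omega)
  have hdvd2 : 2 ^ (u - v) * 2 ^ v ∣ (z.choose k * m) * 2 ^ v := by
    rw [← pow_add, Nat.sub_add_cancel h.le]
    calc 2 ^ u ∣ z.choose k * k := hdvd
    _ = z.choose k * m * 2 ^ v := by rw [← hkm]; ring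
  have hdvd3 : 2 ^ (u - v) ∣ z.choose k * m :=
    (Nat.mul_dvd_mul_iff_right (pow_pos two_pos v)).mp hdvd2
  exact (Nat.Coprime.pow_left _ ((Nat.prime_two.coprime_iff_not_dvd).mpr
    hmodd)).dvd_of_dvd_mul_right hdvd3

theorem typeII_pow_congr (a e : ℕ) (he : 1 < e) (hea : e < a) (z u : ℕ) (hu : 1 ≤ u)
    (hval : emultiplicity 2 (z : ℤ) = (u : ℕ∞)) :
    ((2 : ℤ) ^ e - 1) ^ (2 * z) - 1
      ≡ (((2 : ℤ) ^ e - 1) ^ 2 - 1 + 2 ^ (2 * e + 1)) * (z : ℤ) [ZMOD 2 ^ (2 * e + 2 + u)] := by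
  have he2 : 2 ≤ e := he
  -- facts about z
  have hz2u : (2 : ℤ) ^ u ∣ (z : ℤ) := pow_dvd_of_le_emultiplicity (le_of_eq hval.symm)
  have hzne : z ≠ 0 := by
    rintro rfl
    simp [emultiplicity_zero] at hval
  have hz2u' : 2 ^ u ∣ z := by exact_mod_cast hz2u
  have h2z : 2 ∣ z := (dvd_pow_self 2 (by omega : u ≠ 0)).trans hz2u'
  have hz2 : 2 ≤ z := by omega
  -- abbreviations
  set t : ℤ := 2 ^ (2 * e) - 2 ^ (e + 1) with ht
  set s : ℤ := 2 ^ (e - 1) - 1 with hs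
  have hee : (2 : ℤ) ^ (e + 1) * 2 ^ (e - 1) = 2 ^ (2 * e) := by
    rw [← pow_add]; congr 1; omega
  have hts : t = 2 ^ (e + 1) * s := by rw [ht, hs]; linear_combination -hee
  have hr2 : ((2 : ℤ) ^ e - 1) ^ 2 = 1 + t := by
    rw [ht]
    have h1 : (2 : ℤ) ^ e * 2 ^ e = 2 ^ (2 * e) := by rw [← pow_add]; congr 1; omega
    have h2 : (2 : ℤ) * 2 ^ e = 2 ^ (e + 1) := by rw [pow_succ]; ring
    linear_combination h1 - h2
  -- binomial expansion
  have hsum : (t + 1) ^ z = (1 + (z : ℤ) * t + (z.choose 2 : ℤ) * t ^ 2)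
      + ∑ k ∈ Ico 3 (z + 1), t ^ k * (z.choose k : ℤ) := by
    rw [add_pow]
    rw [Finset.range_eq_Ico, ← Finset.sum_Ico_consecutive _ (Nat.zero_le 3) (by omega : 3 ≤ z + 1)]
    congr 1
    · rw [← Finset.range_eq_Ico]
      rw [Finset.sum_range_succ, Finset.sum_range_succ, Finset.sum_range_one]
      simp [Nat.choose_one_right]
      ring
    · apply Finset.sum_congr rfl
      intro k hk
      simp
  -- parity facts
  have hsodd : Odd s := by
    rw [hs]
    refine Even.sub_odd ?_ odd_one
    have : (2 : ℤ) ^ (e - 1) = 2 * 2 ^ (e - 2) := by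
      rw [← pow_succ']; congr 1; omega
    rw [this]; exact even_two_mul _
  have hzodd : Odd ((z : ℤ) - 1) := by
    refine Even.sub_odd ?_ odd_one
    exact_mod_cast (even_iff_two_dvd.mpr h2z)
  have heven : (2 : ℤ) ∣ ((z : ℤ) - 1) * s ^ 2 - 1 :=
    ((hzodd.mul (hsodd.pow)).sub_odd odd_one).two_dvd
  -- the choose-2 identity
  have hC2 : (z : ℤ) * ((z : ℤ) - 1) = (z.choose 2 : ℤ) * 2 := by
    have := Nat.add_one_mul_choose_eq (z - 1) 1
    rw [Nat.sub_add_cancel (by omega), Nat.choose_one_right] at this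
    have := congrArg (fun n : ℕ => (n : ℤ)) this
    push_cast [Nat.cast_sub (by omega : 1 ≤ z)] at this
    linarith [this]
  have hpow2 : ((2 : ℤ) ^ (e + 1)) ^ 2 = 2 * 2 ^ (2 * e + 1) := by
    rw [← pow_mul, ← pow_succ']; congr 1; omega
  -- divisibility of the quadratic correction term
  have h2 : (2 : ℤ) ^ (2 * e + 2 + u) ∣ (z.choose 2 : ℤ) * t ^ 2 - 2 ^ (2 * e + 1) * (z : ℤ) := by
    have heq : (z.choose 2 : ℤ) * t ^ 2 - 2 ^ (2 * e + 1) * (z : ℤ)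
        = (2 ^ (2 * e + 1) * (z : ℤ)) * (((z : ℤ) - 1) * s ^ 2 - 1) := by
      rw [hts]
      linear_combination ((z.choose 2 : ℤ) * s ^ 2) * hpow2
        - (2 ^ (2 * e + 1) * s ^ 2) * hC2
    rw [heq, show 2 * e + 2 + u = (2 * e + 1) + u + 1 by omega, pow_add, pow_add, pow_one]
    exact mul_dvd_mul (mul_dvd_mul_left _ hz2u) heven
  -- divisibility of the tail sum
  have h1 : (2 : ℤ) ^ (2 * e + 2 + u) ∣ ∑ k ∈ Ico 3 (z + 1), t ^ k * (z.choose k : ℤ) := by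
    apply Finset.dvd_sum
    intro k hk
    rw [Finset.mem_Ico] at hk
    obtain ⟨hk3, _⟩ := hk
    set v := k.factorization 2 with hv
    have hvk : 2 ^ v ≤ k := Nat.le_of_dvd (by omega) (Nat.ordProj_dvd k 2)
    have hc : (2 : ℤ) ^ (u - v) ∣ (z.choose k : ℤ) := by
      exact_mod_cast Int.natCast_dvd_natCast.mpr
        (keyA_choose z u k (by omega) (by omega) hz2u')
    have hts' : (2 : ℤ) ^ (k * (e + 1)) ∣ t ^ k := by
      rw [hts, mul_pow, mul_comm k (e + 1), pow_mul]
      exact dvd_mul_right _ _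
    calc (2 : ℤ) ^ (2 * e + 2 + u) ∣ 2 ^ ((u - v) + k * (e + 1)) :=
          pow_dvd_pow 2 (keyA_ineq e u v k he2 hk3 hvk)
      _ = 2 ^ (k * (e + 1)) * 2 ^ (u - v) := by rw [← pow_add]; ring_nf
      _ ∣ t ^ k * (z.choose k : ℤ) := mul_dvd_mul hts' hc
  -- assemble
  rw [pow_mul, hr2, add_comm (1 : ℤ) t]
  rw [Int.modEq_iff_dvd, hsum]
  have key : (t + 1 - 1 + 2 ^ (2 * e + 1)) * (z : ℤ)
      - ((1 + (z : ℤ) * t + (z.choose 2 : ℤ) * t ^ 2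
        + ∑ k ∈ Ico 3 (z + 1), t ^ k * (z.choose k : ℤ)) - 1)
      = -((z.choose 2 : ℤ) * t ^ 2 - 2 ^ (2 * e + 1) * (z : ℤ))
        + -(∑ k ∈ Ico 3 (z + 1), t ^ k * (z.choose k : ℤ)) := by ring
  rw [key]
  exact dvd_add (dvd_neg.mpr h2) (dvd_neg.mpr h1)
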